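/- For w in the type C Weyl group W(C_n) = {w ∈ S_{2n} : w(2n+1−i) = 2n+1−w(i) for all i}, define S(w) = {(i,j) : 1 ≤ i < j < 2n+1−i, w^{-1}(i) < w^{-1}(j)}. Then |S(w)| + #{i ≤ n : w(i) ≤ n} = n² − ℓ(w), where ℓ(w) is the length of w with respect to the standard generators of W(C_n) and n² is the number of positive roots of type C_n. -/

import Mathlib

open Finset Equiv

variable {n : ℕ}

theorem Equiv.Perm.apply_inv_self {α : Type*} (f : Equiv.Perm α) (x : α) : f (f⁻¹ x) = x :=
  Equiv.apply_symm_apply f x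

theorem Equiv.Perm.inv_apply_self {α : Type*} (f : Equiv.Perm α) (x : α) : f⁻¹ (f x) = x :=
  Equiv.symm_apply_apply f x

lemma swap_val (u v x : Fin (2*n)) :
    ((Equiv.swap u v x : Fin (2*n)) : ℕ) =
      if (x:ℕ) = (u:ℕ) then (v:ℕ) else if (x:ℕ) = (v:ℕ) then (u:ℕ) else (x:ℕ) := by
  rw [Equiv.swap_apply_def]
  simp only [Fin.ext_iff]
  split_ifs <;> rfl

lemma rev_val (x : Fin (2*n)) : (x.rev : ℕ) = 2*n - 1 - (x:ℕ) := by
  rw [Fin.val_rev]; omega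

/-- the symmetry condition defining `W(C_n)` inside `S_{2n}` -/
def HW (w : Equiv.Perm (Fin (2*n))) : Prop := ∀ i : Fin (2*n), w i.rev = (w i).rev

lemma HW.inv {w : Equiv.Perm (Fin (2*n))} (hw : HW w) (i : Fin (2*n)) :
    w⁻¹ i.rev = (w⁻¹ i).rev := by
  apply w.injective
  rw [Equiv.Perm.apply_inv_self, hw (w⁻¹ i), Equiv.Perm.apply_inv_self]

lemma HW.mul {g w : Equiv.Perm (Fin (2*n))} (hg : HW g) (hw : HW w) : HW (g * w) := by
  intro i
  simp only [Equiv.Perm.mul_apply, hw i, hg (w i)]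

lemma HW.one : HW (1 : Equiv.Perm (Fin (2*n))) := fun i => rfl

/-- complement inversion set -/
def cS (n : ℕ) (w : Equiv.Perm (Fin (2*n))) : Finset (Fin (2*n) × Fin (2*n)) :=
  Finset.univ.filter (fun p => (p.1 : ℕ) < (p.2 : ℕ) ∧ (p.1 : ℕ) + (p.2 : ℕ) < 2 * n - 1 ∧
    ((w⁻¹ p.2 : Fin (2*n)) : ℕ) < ((w⁻¹ p.1 : Fin (2*n)) : ℕ))

/-- complement of the middle-dimension set -/
def cD (n : ℕ) (w : Equiv.Perm (Fin (2*n))) : Finset (Fin (2*n)) :=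
  Finset.univ.filter (fun i => (i : ℕ) < n ∧ n ≤ ((w i : Fin (2*n)) : ℕ))

/-- the length candidate -/
def Lfun (n : ℕ) (w : Equiv.Perm (Fin (2*n))) : ℕ := (cS n w).card + (cD n w).card

lemma Lfun_one : Lfun n 1 = 0 := by
  have h1 : cS n 1 = ∅ := by
    ext p; simp only [cS, mem_filter, mem_univ, true_and, notMem_empty, iff_false, inv_one,
      Equiv.Perm.one_apply]
    omega
  have h2 : cD n 1 = ∅ := by
    ext i; simp only [cD, mem_filter, mem_univ, true_and, notMem_empty, iff_false]
    simp only [Equiv.Perm.one_apply]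
    omega
  simp [Lfun, h1, h2]

lemma pairs_card :
    (Finset.univ.filter (fun p : Fin (2*n) × Fin (2*n) =>
      (p.1 : ℕ) < (p.2 : ℕ) ∧ (p.1 : ℕ) + (p.2 : ℕ) < 2 * n - 1)).card + n = n * n := by
  rw [Finset.card_filter, Fintype.sum_prod_type]
  have h1 : ∀ x : Fin (2*n),
      (∑ y : Fin (2*n), if (x:ℕ) < (y:ℕ) ∧ (x:ℕ) + (y:ℕ) < 2*n-1 then 1 else 0)
        = 2*n - 2 - 2*(x:ℕ) := by
    intro x
    rw [Fin.sum_univ_eq_sum_range (fun yv => if (x:ℕ) < yv ∧ (x:ℕ) + yv < 2*n-1 then 1 else 0)]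
    rw [← Finset.card_filter]
    have he : (Finset.range (2*n)).filter (fun yv => (x:ℕ) < yv ∧ (x:ℕ) + yv < 2*n-1)
        = Finset.Ico ((x:ℕ)+1) (2*n-1-(x:ℕ)) := by
      ext y; simp only [mem_filter, mem_range, Finset.mem_Ico]; omega
    rw [he, Nat.card_Ico]
    omega
  calc (∑ x : Fin (2*n), ∑ y : Fin (2*n),
          if (x:ℕ) < (y:ℕ) ∧ (x:ℕ) + (y:ℕ) < 2*n-1 then 1 else 0) + n
      = (∑ x : Fin (2*n), (2*n - 2 - 2*(x:ℕ))) + n := by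
        rw [Finset.sum_congr rfl (fun x _ => h1 x)]
    _ = (∑ x ∈ Finset.range (2*n), (2*n - 2 - 2*x)) + n := by
        rw [Fin.sum_univ_eq_sum_range (fun xv => 2*n - 2 - 2*xv)]
    _ = (∑ x ∈ Finset.range n, (2*n - 2 - 2*x)) + n := by
        congr 1
        refine (Finset.sum_subset (by intro t ht; simp only [mem_range] at *; omega) ?_).symm
        intro x hx hnx
        simp only [mem_range] at hx hnx
        omega
    _ = (∑ x ∈ Finset.range n, 2*(n - 1 - x)) + n := by
        congr 1; exact Finset.sum_congr rfl (fun x hx => by simp only [mem_range] at hx; omega)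
    _ = 2 * (∑ x ∈ Finset.range n, (n - 1 - x)) + n := by rw [Finset.mul_sum]
    _ = 2 * (∑ x ∈ Finset.range n, x) + n := by
        congr 2
        exact Finset.sum_range_reflect (fun j => j) n
    _ = n * (n-1) + n := by
        rw [← Finset.sum_range_id_mul_two n]; ring
    _ = n * n := by cases n <;> simp [Nat.succ_sub_one, Nat.mul_succ]

lemma ltn_card : (Finset.univ.filter (fun i : Fin (2*n) => (i:ℕ) < n)).card = n := by
  rw [Finset.card_filter]
  rw [Fin.sum_univ_eq_sum_range (fun iv => if iv < n then 1 else 0)]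
  rw [← Finset.card_filter]
  have he : (Finset.range (2*n)).filter (fun iv => iv < n) = Finset.range n := by
    ext y; simp only [mem_filter, mem_range]; omega
  rw [he, Finset.card_range]

lemma S_split (w : Equiv.Perm (Fin (2*n))) :
    (Finset.univ.filter (fun p : Fin (2*n) × Fin (2*n) =>
        (p.1 : ℕ) < (p.2 : ℕ) ∧ (p.1 : ℕ) + (p.2 : ℕ) < 2 * n - 1 ∧
        ((w⁻¹ p.1 : Fin (2*n)) : ℕ) < ((w⁻¹ p.2 : Fin (2*n)) : ℕ))).card
      + (cS n w).card + n = n * n := by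
  rw [← pairs_card]
  congr 1
  set base := Finset.univ.filter (fun p : Fin (2*n) × Fin (2*n) =>
      (p.1 : ℕ) < (p.2 : ℕ) ∧ (p.1 : ℕ) + (p.2 : ℕ) < 2 * n - 1) with hbase
  have key := Finset.card_filter_add_card_filter_not
    (s := base) (p := fun p : Fin (2*n) × Fin (2*n) =>
      ((w⁻¹ p.1 : Fin (2*n)) : ℕ) < ((w⁻¹ p.2 : Fin (2*n)) : ℕ))
  rw [← key]
  congr 1
  · apply congrArg Finset.card
    rw [hbase, Finset.filter_filter]
    ext p
    simp only [mem_filter, mem_univ, true_and]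
    tauto
  · apply congrArg Finset.card
    rw [hbase, Finset.filter_filter]
    ext p
    simp only [cS, mem_filter, mem_univ, true_and]
    constructor
    · rintro ⟨h1, h2, h3⟩; exact ⟨⟨h1, h2⟩, by omega⟩
    · rintro ⟨⟨h1, h2⟩, h3⟩
      refine ⟨h1, h2, ?_⟩
      have hne : w⁻¹ p.1 ≠ w⁻¹ p.2 := by
        intro h
        have : p.1 = p.2 := w⁻¹.injective h
        rw [this] at h1; omega
      have : ((w⁻¹ p.1 : Fin (2*n)) : ℕ) ≠ ((w⁻¹ p.2 : Fin (2*n)) : ℕ) := by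
        intro h; exact hne (Fin.ext h)
      omega

lemma D_split (w : Equiv.Perm (Fin (2*n))) :
    (Finset.univ.filter (fun i : Fin (2*n) =>
        (i : ℕ) < n ∧ ((w i : Fin (2*n)) : ℕ) < n)).card + (cD n w).card = n := by
  conv_rhs => rw [← ltn_card (n := n)]
  have key := Finset.card_filter_add_card_filter_not
    (s := Finset.univ.filter (fun i : Fin (2*n) => (i:ℕ) < n))
    (p := fun i : Fin (2*n) => ((w i : Fin (2*n)) : ℕ) < n)
  rw [← key]
  congr 1
  · apply congrArg Finset.card
    rw [Finset.filter_filter]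
  · apply congrArg Finset.card
    rw [Finset.filter_filter]
    ext i
    simp only [cD, mem_filter, mem_univ, true_and]
    omega

lemma mulinv_apply {g w : Equiv.Perm (Fin (2*n))} (hg : g⁻¹ = g) (z : Fin (2*n)) :
    (g * w)⁻¹ z = w⁻¹ (g z) := by
  rw [mul_inv_rev, hg, Equiv.Perm.mul_apply]

/-! ### the middle generator s₀ -/

section S0
variable {u v : Fin (2*n)}

lemma sw_val (hu : (u:ℕ) = n-1) (hv : (v:ℕ) = n) (x : Fin (2*n)) :
    ((Equiv.swap u v x : Fin (2*n)) : ℕ) =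
      if (x:ℕ) = n-1 then n else if (x:ℕ) = n then n-1 else (x:ℕ) := by
  rw [swap_val, hu, hv]

lemma sw_gg (hu : (u:ℕ) = n-1) (hv : (v:ℕ) = n) (x : Fin (2*n)) :
    Equiv.swap u v (Equiv.swap u v x) = x := by
  apply Fin.ext
  rw [sw_val hu hv, sw_val hu hv]
  have := x.isLt
  have hn : 0 < n := by omega
  split_ifs <;> omega

lemma sw_mul_self (hu : (u:ℕ) = n-1) (hv : (v:ℕ) = n) :
    Equiv.swap u v * Equiv.swap u v = 1 := by
  ext x
  exact congrArg Fin.val (sw_gg hu hv x)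

lemma sw_inv (hu : (u:ℕ) = n-1) (hv : (v:ℕ) = n) : (Equiv.swap u v)⁻¹ = Equiv.swap u v := by
  rw [eq_comm, eq_inv_iff_mul_eq_one, sw_mul_self hu hv]

lemma sw_hw (hu : (u:ℕ) = n-1) (hv : (v:ℕ) = n) : HW (Equiv.swap u v) := by
  intro x
  apply Fin.ext
  rw [rev_val, sw_val hu hv, sw_val hu hv, rev_val]
  have := x.isLt
  have hn : 0 < n := by omega
  split_ifs <;> omega

lemma cS_sw_card (hu : (u:ℕ) = n-1) (hv : (v:ℕ) = n) (w : Equiv.Perm (Fin (2*n))) :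
    (cS n (Equiv.swap u v * w)).card = (cS n w).card := by
  apply Finset.card_equiv (Equiv.prodCongr (Equiv.swap u v) (Equiv.swap u v))
  rintro ⟨x, y⟩
  simp only [cS, mem_filter, mem_univ, true_and, Equiv.prodCongr_apply, Prod.map_apply]
  rw [mulinv_apply (sw_inv hu hv), mulinv_apply (sw_inv hu hv)]
  have key : ((x:ℕ) < (y:ℕ) ∧ (x:ℕ) + (y:ℕ) < 2*n-1) ↔
      (((Equiv.swap u v x : Fin (2*n)):ℕ) < ((Equiv.swap u v y : Fin (2*n)):ℕ) ∧
        ((Equiv.swap u v x : Fin (2*n)):ℕ) + ((Equiv.swap u v y : Fin (2*n)):ℕ) < 2*n-1) := by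
    rw [sw_val hu hv x, sw_val hu hv y]
    have := x.isLt; have := y.isLt
    have hn : 0 < n := by omega
    split_ifs <;> omega
  tauto

lemma cD_sw_asc (hu : (u:ℕ) = n-1) (hv : (v:ℕ) = n) (w : Equiv.Perm (Fin (2*n))) (hw : HW w)
    (h : ((w⁻¹ u : Fin (2*n)) : ℕ) < n) :
    (cD n (Equiv.swap u v * w)).card = (cD n w).card + 1 := by
  have hn : 0 < n := by have := v.isLt; omega
  have hq : w⁻¹ v = (w⁻¹ u).rev := by
    have e : v = u.rev := Fin.ext (by rw [rev_val]; omega)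
    rw [e, hw.inv]
  have hwp0 : w (w⁻¹ u) = u := Equiv.Perm.apply_inv_self w u
  have hwq : w (w⁻¹ u).rev = v := by rw [← hq, Equiv.Perm.apply_inv_self]
  have hqval : ((w⁻¹ u).rev : ℕ) = 2*n-1-((w⁻¹ u : Fin (2*n)):ℕ) := rev_val _
  have hset : cD n (Equiv.swap u v * w) = insert (w⁻¹ u) (cD n w) := by
    ext i
    simp only [cD, mem_filter, mem_univ, true_and, mem_insert]
    simp only [Equiv.Perm.mul_apply]
    rw [sw_val hu hv (w i)]
    by_cases hi : i = w⁻¹ u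
    · subst hi
      rw [hwp0, hu, if_pos rfl]
      simpa using h
    · by_cases hi2 : i = (w⁻¹ u).rev
      · subst hi2
        rw [hwq, hv, if_neg (by omega), if_pos rfl]
        constructor
        · rintro ⟨h1, -⟩; omega
        · rintro (heq | ⟨h1, -⟩)
          · exact absurd (congrArg Fin.val heq) (by omega)
          · omega
      · have hne1 : ((w i : Fin (2*n)) : ℕ) ≠ n-1 := by
          intro hh
          exact hi (by rw [show u = w i from (Fin.ext (by omega)), Equiv.Perm.inv_apply_self])
        have hne2 : ((w i : Fin (2*n)) : ℕ) ≠ n := by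
          intro hh
          have : v = w i := Fin.ext (by omega)
          exact hi2 (by rw [hq.symm, this, Equiv.Perm.inv_apply_self])
        rw [if_neg hne1, if_neg hne2]
        simp at hi
        simp [hi]
  rw [hset, Finset.card_insert_of_notMem]
  simp only [cD, mem_filter, mem_univ, true_and, not_and, not_le, hwp0, hu]
  intro _
  omega

lemma cD_sw_desc (hu : (u:ℕ) = n-1) (hv : (v:ℕ) = n) (w : Equiv.Perm (Fin (2*n))) (hw : HW w)
    (h : n ≤ ((w⁻¹ u : Fin (2*n)) : ℕ)) :
    (cD n (Equiv.swap u v * w)).card + 1 = (cD n w).card := by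
  have hn : 0 < n := by have := v.isLt; omega
  have hq : w⁻¹ v = (w⁻¹ u).rev := by
    have e : v = u.rev := Fin.ext (by rw [rev_val]; omega)
    rw [e, hw.inv]
  have hwp0 : w (w⁻¹ u) = u := Equiv.Perm.apply_inv_self w u
  have hwq : w (w⁻¹ u).rev = v := by rw [← hq, Equiv.Perm.apply_inv_self]
  have hqval : ((w⁻¹ u).rev : ℕ) = 2*n-1-((w⁻¹ u : Fin (2*n)):ℕ) := rev_val _
  have hp0lt := (w⁻¹ u).isLt
  have hmem : (w⁻¹ u).rev ∈ cD n w := by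
    simp only [cD, mem_filter, mem_univ, true_and, hwq, hv]
    omega
  have hset : cD n (Equiv.swap u v * w) = (cD n w).erase (w⁻¹ u).rev := by
    ext i
    simp only [cD, mem_filter, mem_univ, true_and, Finset.mem_erase]
    simp only [Equiv.Perm.mul_apply]
    rw [sw_val hu hv (w i)]
    by_cases hi : i = w⁻¹ u
    · subst hi
      rw [hwp0, hu, if_pos rfl]
      constructor
      · rintro ⟨h1, -⟩; omega
      · rintro ⟨-, h1, -⟩; omega
    · by_cases hi2 : i = (w⁻¹ u).rev
      · subst hi2
        rw [hwq, hv, if_neg (by omega), if_pos rfl]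
        constructor
        · rintro ⟨-, h1⟩; omega
        · rintro ⟨hne, -⟩; exact absurd rfl hne
      · have hne1 : ((w i : Fin (2*n)) : ℕ) ≠ n-1 := by
          intro hh
          exact hi (by rw [show u = w i from (Fin.ext (by omega)), Equiv.Perm.inv_apply_self])
        have hne2 : ((w i : Fin (2*n)) : ℕ) ≠ n := by
          intro hh
          have : v = w i := Fin.ext (by omega)
          exact hi2 (by rw [hq.symm, this, Equiv.Perm.inv_apply_self])
        rw [if_neg hne1, if_neg hne2]
        simp at hi2
        simp [hi2]
  rw [hset, Finset.card_erase_add_one hmem]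

lemma Lstep0 (hu : (u:ℕ) = n-1) (hv : (v:ℕ) = n) (w : Equiv.Perm (Fin (2*n))) (hw : HW w) :
    (((w⁻¹ u : Fin (2*n)) : ℕ) < ((w⁻¹ v : Fin (2*n)) : ℕ) →
      Lfun n (Equiv.swap u v * w) = Lfun n w + 1) ∧
    (((w⁻¹ v : Fin (2*n)) : ℕ) < ((w⁻¹ u : Fin (2*n)) : ℕ) →
      Lfun n (Equiv.swap u v * w) + 1 = Lfun n w) := by
  have hn : 0 < n := by have := v.isLt; omega
  have hq : w⁻¹ v = (w⁻¹ u).rev := by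
    have e : v = u.rev := Fin.ext (by rw [rev_val]; omega)
    rw [e, hw.inv]
  have hqval : ((w⁻¹ v : Fin (2*n)) : ℕ) = 2*n-1-((w⁻¹ u : Fin (2*n)):ℕ) := by
    rw [hq, rev_val]
  have hlt := (w⁻¹ u).isLt
  constructor
  · intro hasc
    have h : ((w⁻¹ u : Fin (2*n)) : ℕ) < n := by omega
    rw [Lfun, Lfun, cS_sw_card hu hv w, cD_sw_asc hu hv w hw h]
    ring
  · intro hdesc
    have h : n ≤ ((w⁻¹ u : Fin (2*n)) : ℕ) := by omega
    rw [Lfun, Lfun, cS_sw_card hu hv w, add_assoc, cD_sw_desc hu hv w hw h]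

end S0

/-! ### the generators sᵢ, 1 ≤ i ≤ n-1 -/

section SI
variable {i : ℕ} {a a' b b' : Fin (2*n)}

lemma gi_val (h1 : 1 ≤ i) (h2 : i ≤ n-1) (ha : (a:ℕ) = n-i-1) (ha' : (a':ℕ) = n-i)
    (hb : (b:ℕ) = n+i-1) (hb' : (b':ℕ) = n+i) (x : Fin (2*n)) :
    (((Equiv.swap a a' * Equiv.swap b b') x : Fin (2*n)) : ℕ) =
      if (x:ℕ) = n-i-1 then n-i else if (x:ℕ) = n-i then n-i-1 else
      if (x:ℕ) = n+i-1 then n+i else if (x:ℕ) = n+i then n+i-1 else (x:ℕ) := by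
  rw [Equiv.Perm.mul_apply, swap_val a a', swap_val b b' x, ha, ha', hb, hb']
  have := x.isLt
  split_ifs <;> omega

lemma gi_gg (h1 : 1 ≤ i) (h2 : i ≤ n-1) (ha : (a:ℕ) = n-i-1) (ha' : (a':ℕ) = n-i)
    (hb : (b:ℕ) = n+i-1) (hb' : (b':ℕ) = n+i) (x : Fin (2*n)) :
    (Equiv.swap a a' * Equiv.swap b b') ((Equiv.swap a a' * Equiv.swap b b') x) = x := by
  apply Fin.ext
  rw [gi_val h1 h2 ha ha' hb hb', gi_val h1 h2 ha ha' hb hb']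
  have := x.isLt
  split_ifs <;> omega

lemma gi_mul_self (h1 : 1 ≤ i) (h2 : i ≤ n-1) (ha : (a:ℕ) = n-i-1) (ha' : (a':ℕ) = n-i)
    (hb : (b:ℕ) = n+i-1) (hb' : (b':ℕ) = n+i) :
    (Equiv.swap a a' * Equiv.swap b b') * (Equiv.swap a a' * Equiv.swap b b') = 1 := by
  ext x
  exact congrArg Fin.val (gi_gg h1 h2 ha ha' hb hb' x)

lemma gi_inv (h1 : 1 ≤ i) (h2 : i ≤ n-1) (ha : (a:ℕ) = n-i-1) (ha' : (a':ℕ) = n-i)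
    (hb : (b:ℕ) = n+i-1) (hb' : (b':ℕ) = n+i) :
    (Equiv.swap a a' * Equiv.swap b b')⁻¹ = Equiv.swap a a' * Equiv.swap b b' := by
  rw [eq_comm, eq_inv_iff_mul_eq_one, gi_mul_self h1 h2 ha ha' hb hb']

lemma gi_hw (h1 : 1 ≤ i) (h2 : i ≤ n-1) (ha : (a:ℕ) = n-i-1) (ha' : (a':ℕ) = n-i)
    (hb : (b:ℕ) = n+i-1) (hb' : (b':ℕ) = n+i) :
    HW (Equiv.swap a a' * Equiv.swap b b') := by
  intro x
  apply Fin.ext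
  rw [rev_val, gi_val h1 h2 ha ha' hb hb', gi_val h1 h2 ha ha' hb hb', rev_val]
  have := x.isLt
  split_ifs <;> omega

lemma gi_app_a (h1 : 1 ≤ i) (h2 : i ≤ n-1) (ha : (a:ℕ) = n-i-1) (ha' : (a':ℕ) = n-i)
    (hb : (b:ℕ) = n+i-1) (hb' : (b':ℕ) = n+i) :
    (Equiv.swap a a' * Equiv.swap b b') a = a' := by
  apply Fin.ext
  rw [gi_val h1 h2 ha ha' hb hb', ha, ha']
  have := a.isLt
  split_ifs <;> omega

lemma gi_app_a' (h1 : 1 ≤ i) (h2 : i ≤ n-1) (ha : (a:ℕ) = n-i-1) (ha' : (a':ℕ) = n-i)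
    (hb : (b:ℕ) = n+i-1) (hb' : (b':ℕ) = n+i) :
    (Equiv.swap a a' * Equiv.swap b b') a' = a := by
  apply Fin.ext
  rw [gi_val h1 h2 ha ha' hb hb', ha, ha']
  split_ifs <;> omega

lemma gi_app_b (h1 : 1 ≤ i) (h2 : i ≤ n-1) (ha : (a:ℕ) = n-i-1) (ha' : (a':ℕ) = n-i)
    (hb : (b:ℕ) = n+i-1) (hb' : (b':ℕ) = n+i) :
    (Equiv.swap a a' * Equiv.swap b b') b = b' := by
  apply Fin.ext
  rw [gi_val h1 h2 ha ha' hb hb', hb, hb']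
  split_ifs <;> omega

lemma gi_app_b' (h1 : 1 ≤ i) (h2 : i ≤ n-1) (ha : (a:ℕ) = n-i-1) (ha' : (a':ℕ) = n-i)
    (hb : (b:ℕ) = n+i-1) (hb' : (b':ℕ) = n+i) :
    (Equiv.swap a a' * Equiv.swap b b') b' = b := by
  apply Fin.ext
  rw [gi_val h1 h2 ha ha' hb hb', hb, hb']
  split_ifs <;> omega

lemma mem_cS_iff (w : Equiv.Perm (Fin (2*n))) (z1 z2 : Fin (2*n)) :
    ((z1, z2) : Fin (2*n) × Fin (2*n)) ∈ cS n w ↔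
      (z1:ℕ) < (z2:ℕ) ∧ (z1:ℕ) + (z2:ℕ) < 2*n-1 ∧
        ((w⁻¹ z2 : Fin (2*n)):ℕ) < ((w⁻¹ z1 : Fin (2*n)):ℕ) := by
  simp [cS]

def natF (n i t : ℕ) : ℕ :=
  if t = n-i-1 then n-i else if t = n-i then n-i-1 else
  if t = n+i-1 then n+i else if t = n+i then n+i-1 else t

set_option maxHeartbeats 2000000 in
lemma natF_key {i : ℕ} (h1 : 1 ≤ i) (h2 : i ≤ n-1) (xv yv : ℕ) (hx : xv < 2*n) (hy : yv < 2*n)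
    (hab2 : ¬(natF n i xv = n-i-1 ∧ natF n i yv = n+i-1))
    (hab2' : ¬(natF n i xv = n-i ∧ natF n i yv = n+i)) :
    (¬(xv = n-i-1 ∧ yv = n-i) ∧ xv < yv ∧ xv + yv < 2*n-1) ↔
    (¬(natF n i xv = n-i-1 ∧ natF n i yv = n-i) ∧ natF n i xv < natF n i yv ∧
      natF n i xv + natF n i yv < 2*n-1) := by
  unfold natF at hab2 hab2' ⊢
  split_ifs at hab2 hab2' ⊢ <;> omega

lemma cS_gi_key (h1 : 1 ≤ i) (h2 : i ≤ n-1) (ha : (a:ℕ) = n-i-1) (ha' : (a':ℕ) = n-i)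
    (hb : (b:ℕ) = n+i-1) (hb' : (b':ℕ) = n+i) (w : Equiv.Perm (Fin (2*n))) (hw : HW w) :
    ∀ p : Fin (2*n) × Fin (2*n),
      p ∈ (cS n ((Equiv.swap a a' * Equiv.swap b b') * w)).erase (a, a') ↔
      ((Equiv.prodCongr (Equiv.swap a a' * Equiv.swap b b')
          (Equiv.swap a a' * Equiv.swap b b')).trans
        (Equiv.swap ((a, b) : Fin (2*n) × Fin (2*n)) (a', b'))) p
        ∈ (cS n w).erase (a, a') := by
  have hgg := gi_gg h1 h2 ha ha' hb hb'
  have hga := gi_app_a h1 h2 ha ha' hb hb'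
  have hga' := gi_app_a' h1 h2 ha ha' hb hb'
  have hgb := gi_app_b h1 h2 ha ha' hb hb'
  have hgb' := gi_app_b' h1 h2 ha ha' hb hb'
  have hginv := gi_inv h1 h2 ha ha' hb hb'
  have gval := gi_val h1 h2 ha ha' hb hb'
  set g := Equiv.swap a a' * Equiv.swap b b' with hG
  have hn2 : 2 ≤ n := by omega
  have hrev1 : b' = a.rev := Fin.ext (by rw [rev_val]; omega)
  have hrev2 : a' = b.rev := Fin.ext (by rw [rev_val]; omega)
  rintro ⟨x, y⟩
  rw [Equiv.trans_apply, Equiv.prodCongr_apply, Prod.map_apply]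
  by_cases hab : ((g x, g y) : Fin (2*n) × Fin (2*n)) = (a, b)
  · -- then (x,y) = (a', b'); both sides fail the sum bound
    obtain ⟨e1, e2⟩ := Prod.mk.injEq .. ▸ hab
    have hx : x = a' := by rw [← hgg x, e1, hga]
    have hy : y = b' := by rw [← hgg y, e2, hgb]
    have hp : ((x, y) : Fin (2*n) × Fin (2*n)) = (a', b') := by rw [hx, hy]
    rw [hp, hab, Equiv.swap_apply_left]
    rw [Finset.mem_erase, Finset.mem_erase, mem_cS_iff, mem_cS_iff]
    constructor <;> (rintro ⟨-, -, hsum, -⟩; exact absurd hsum (by omega))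
  · by_cases hab' : ((g x, g y) : Fin (2*n) × Fin (2*n)) = (a', b')
    · -- then (x,y) = (a, b); membership is preserved thanks to the symmetry
      obtain ⟨e1, e2⟩ := Prod.mk.injEq .. ▸ hab'
      have hx : x = a := by rw [← hgg x, e1, hga']
      have hy : y = b := by rw [← hgg y, e2, hgb']
      have hp : ((x, y) : Fin (2*n) × Fin (2*n)) = (a, b) := by rw [hx, hy]
      rw [hp, hab', Equiv.swap_apply_right]
      rw [Finset.mem_erase, Finset.mem_erase, mem_cS_iff, mem_cS_iff]
      have hne : (((a, b)) : Fin (2*n) × Fin (2*n)) ≠ (a, a') := by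
        intro hcon
        obtain ⟨-, e⟩ := Prod.mk.injEq .. ▸ hcon
        have := congrArg Fin.val e; omega
      have hiff : (((g * w)⁻¹ b : Fin (2*n)) : ℕ) < (((g * w)⁻¹ a : Fin (2*n)) : ℕ) ↔
          ((w⁻¹ b : Fin (2*n)) : ℕ) < ((w⁻¹ a : Fin (2*n)) : ℕ) := by
        rw [mulinv_apply hginv, mulinv_apply hginv, hga, hgb]
        rw [show a' = b.rev from hrev2, show b' = a.rev from hrev1, hw.inv, hw.inv,
          rev_val, rev_val]
        have := (w⁻¹ a).isLt
        have := (w⁻¹ b).isLt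
        omega
      constructor
      · rintro ⟨-, hlt, hsum, hc3⟩
        exact ⟨hne, hlt, hsum, hiff.mp hc3⟩
      · rintro ⟨-, hlt, hsum, hc3⟩
        exact ⟨hne, hlt, hsum, hiff.mpr hc3⟩
    · -- generic case
      rw [Equiv.swap_apply_of_ne_of_ne hab hab']
      rw [Finset.mem_erase, Finset.mem_erase, mem_cS_iff, mem_cS_iff]
      rw [mulinv_apply hginv, mulinv_apply hginv]
      have hne1 : ((((x, y)) : Fin (2*n) × Fin (2*n)) ≠ (a, a')) ↔
          ¬((x:ℕ) = n-i-1 ∧ (y:ℕ) = n-i) := by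
        rw [Ne, Prod.mk.injEq, Fin.ext_iff, Fin.ext_iff, ha, ha']
      have hne2 : ((((g x, g y)) : Fin (2*n) × Fin (2*n)) ≠ (a, a')) ↔
          ¬(((g x : Fin (2*n)):ℕ) = n-i-1 ∧ ((g y : Fin (2*n)):ℕ) = n-i) := by
        rw [Ne, Prod.mk.injEq, Fin.ext_iff, Fin.ext_iff, ha, ha']
      rw [hne1, hne2]
      have hab2 : ¬(((g x : Fin (2*n)) : ℕ) = n-i-1 ∧ ((g y : Fin (2*n)) : ℕ) = n+i-1) := by
        rintro ⟨f1, f2⟩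
        exact hab (by rw [show g x = a from Fin.ext (by omega),
          show g y = b from Fin.ext (by omega)])
      have hab2' : ¬(((g x : Fin (2*n)) : ℕ) = n-i ∧ ((g y : Fin (2*n)) : ℕ) = n+i) := by
        rintro ⟨f1, f2⟩
        exact hab' (by rw [show g x = a' from Fin.ext (by omega),
          show g y = b' from Fin.ext (by omega)])
      have hFx : ((g x : Fin (2*n)):ℕ) = natF n i (x:ℕ) := by rw [gval x]; rfl
      have hFy : ((g y : Fin (2*n)):ℕ) = natF n i (y:ℕ) := by rw [gval y]; rfl
      rw [hFx, hFy] at hab2 hab2' ⊢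
      have key := natF_key h1 h2 (x:ℕ) (y:ℕ) x.isLt y.isLt hab2 hab2'
      constructor
      · rintro ⟨hne, hX, hY, hT⟩
        obtain ⟨k1, k2, k3⟩ := key.mp ⟨hne, hX, hY⟩
        exact ⟨k1, k2, k3, hT⟩
      · rintro ⟨hne, hX, hY, hT⟩
        obtain ⟨k1, k2, k3⟩ := key.mpr ⟨hne, hX, hY⟩
        exact ⟨k1, k2, k3, hT⟩

lemma x0_mem_B_iff (h1 : 1 ≤ i) (h2 : i ≤ n-1) (ha : (a:ℕ) = n-i-1) (ha' : (a':ℕ) = n-i)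
    (hb : (b:ℕ) = n+i-1) (hb' : (b':ℕ) = n+i) (w : Equiv.Perm (Fin (2*n))) :
    (((a, a') : Fin (2*n) × Fin (2*n)) ∈ cS n ((Equiv.swap a a' * Equiv.swap b b') * w) ↔
      ((w⁻¹ a : Fin (2*n)):ℕ) < ((w⁻¹ a' : Fin (2*n)):ℕ)) := by
  rw [mem_cS_iff]
  rw [mulinv_apply (gi_inv h1 h2 ha ha' hb hb'), mulinv_apply (gi_inv h1 h2 ha ha' hb hb'),
    gi_app_a h1 h2 ha ha' hb hb', gi_app_a' h1 h2 ha ha' hb hb']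
  have hn2 : 2 ≤ n := by omega
  constructor
  · rintro ⟨-, -, h3⟩; exact h3
  · intro h3; exact ⟨by omega, by omega, h3⟩

lemma x0_mem_A_iff (h1 : 1 ≤ i) (h2 : i ≤ n-1) (ha : (a:ℕ) = n-i-1) (ha' : (a':ℕ) = n-i)
    (w : Equiv.Perm (Fin (2*n))) :
    (((a, a') : Fin (2*n) × Fin (2*n)) ∈ cS n w ↔
      ((w⁻¹ a' : Fin (2*n)):ℕ) < ((w⁻¹ a : Fin (2*n)):ℕ)) := by
  rw [mem_cS_iff]
  have hn2 : 2 ≤ n := by omega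
  constructor
  · rintro ⟨-, -, h3⟩; exact h3
  · intro h3; exact ⟨by omega, by omega, h3⟩

lemma cS_gi_asc (h1 : 1 ≤ i) (h2 : i ≤ n-1) (ha : (a:ℕ) = n-i-1) (ha' : (a':ℕ) = n-i)
    (hb : (b:ℕ) = n+i-1) (hb' : (b':ℕ) = n+i) (w : Equiv.Perm (Fin (2*n))) (hw : HW w)
    (hasc : ((w⁻¹ a : Fin (2*n)):ℕ) < ((w⁻¹ a' : Fin (2*n)):ℕ)) :
    (cS n ((Equiv.swap a a' * Equiv.swap b b') * w)).card = (cS n w).card + 1 := by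
  have hcard := Finset.card_equiv _ (cS_gi_key h1 h2 ha ha' hb hb' w hw)
  have hB : ((a, a') : Fin (2*n) × Fin (2*n)) ∈ cS n ((Equiv.swap a a' * Equiv.swap b b') * w) :=
    (x0_mem_B_iff h1 h2 ha ha' hb hb' w).mpr hasc
  have hA : ((a, a') : Fin (2*n) × Fin (2*n)) ∉ cS n w := by
    rw [x0_mem_A_iff h1 h2 ha ha' w]; omega
  rw [← Finset.card_erase_add_one hB, hcard, Finset.erase_eq_of_notMem hA]

lemma cS_gi_desc (h1 : 1 ≤ i) (h2 : i ≤ n-1) (ha : (a:ℕ) = n-i-1) (ha' : (a':ℕ) = n-i)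
    (hb : (b:ℕ) = n+i-1) (hb' : (b':ℕ) = n+i) (w : Equiv.Perm (Fin (2*n))) (hw : HW w)
    (hdesc : ((w⁻¹ a' : Fin (2*n)):ℕ) < ((w⁻¹ a : Fin (2*n)):ℕ)) :
    (cS n ((Equiv.swap a a' * Equiv.swap b b') * w)).card + 1 = (cS n w).card := by
  have hcard := Finset.card_equiv _ (cS_gi_key h1 h2 ha ha' hb hb' w hw)
  have hB : ((a, a') : Fin (2*n) × Fin (2*n)) ∉ cS n ((Equiv.swap a a' * Equiv.swap b b') * w) := by
    rw [x0_mem_B_iff h1 h2 ha ha' hb hb' w]; omega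
  have hA : ((a, a') : Fin (2*n) × Fin (2*n)) ∈ cS n w :=
    (x0_mem_A_iff h1 h2 ha ha' w).mpr hdesc
  rw [← Finset.erase_eq_of_notMem hB, hcard, Finset.card_erase_add_one hA]

lemma cD_gi (h1 : 1 ≤ i) (h2 : i ≤ n-1) (ha : (a:ℕ) = n-i-1) (ha' : (a':ℕ) = n-i)
    (hb : (b:ℕ) = n+i-1) (hb' : (b':ℕ) = n+i) (w : Equiv.Perm (Fin (2*n))) :
    cD n ((Equiv.swap a a' * Equiv.swap b b') * w) = cD n w := by
  have hcross : ∀ x : Fin (2*n),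
      n ≤ (((Equiv.swap a a' * Equiv.swap b b') x : Fin (2*n)):ℕ) ↔ n ≤ (x:ℕ) := by
    intro x
    rw [gi_val h1 h2 ha ha' hb hb']
    have := x.isLt
    split_ifs <;> omega
  ext j
  simp only [cD, mem_filter, mem_univ, true_and]
  rw [show ((Equiv.swap a a' * Equiv.swap b b' * w) j)
      = (Equiv.swap a a' * Equiv.swap b b') (w j) from rfl, hcross (w j)]

lemma Lstepi (h1 : 1 ≤ i) (h2 : i ≤ n-1) (ha : (a:ℕ) = n-i-1) (ha' : (a':ℕ) = n-i)
    (hb : (b:ℕ) = n+i-1) (hb' : (b':ℕ) = n+i) (w : Equiv.Perm (Fin (2*n))) (hw : HW w) :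
    (((w⁻¹ a : Fin (2*n)) : ℕ) < ((w⁻¹ a' : Fin (2*n)) : ℕ) →
      Lfun n ((Equiv.swap a a' * Equiv.swap b b') * w) = Lfun n w + 1) ∧
    (((w⁻¹ a' : Fin (2*n)) : ℕ) < ((w⁻¹ a : Fin (2*n)) : ℕ) →
      Lfun n ((Equiv.swap a a' * Equiv.swap b b') * w) + 1 = Lfun n w) := by
  constructor
  · intro hasc
    rw [Lfun, Lfun, cS_gi_asc h1 h2 ha ha' hb hb' w hw hasc, cD_gi h1 h2 ha ha' hb hb' w]
    ring
  · intro hdesc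
    rw [Lfun, Lfun, ← cS_gi_desc h1 h2 ha ha' hb hb' w hw hdesc, cD_gi h1 h2 ha ha' hb hb' w]
    ring

end SI

/-! ### glue -/


/-- The standard Coxeter generators of the Weyl group `W(Cₙ)`, realized inside `S_{2n}`
(0-indexed): `s₀` swaps positions `n-1, n`, and for `1 ≤ i ≤ n-1`, `sᵢ` swaps
`n-i-1, n-i` and simultaneously `n+i-1, n+i`. -/
def typeCGenerators (n : ℕ) : Set (Equiv.Perm (Fin (2 * n))) :=
  {g | (∃ _h : 0 < n,
          g = Equiv.swap (⟨n - 1, by omega⟩ : Fin (2 * n)) ⟨n, by omega⟩) ∨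
       (∃ i : ℕ, ∃ _h1 : 1 ≤ i, ∃ _h2 : i ≤ n - 1, ∃ _h3 : 0 < n,
          g = Equiv.swap (⟨n - i - 1, by omega⟩ : Fin (2 * n)) ⟨n - i, by omega⟩ *
              Equiv.swap (⟨n + i - 1, by omega⟩ : Fin (2 * n)) ⟨n + i, by omega⟩)}

/-- `w` is a product of `k` of the type-C generators. -/
def IsProdOfGens (n k : ℕ) (w : Equiv.Perm (Fin (2 * n))) : Prop :=
  ∃ l : List (Equiv.Perm (Fin (2 * n))),
    l.length = k ∧ (∀ g ∈ l, g ∈ typeCGenerators n) ∧ l.prod = w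

lemma gen_hw {g : Equiv.Perm (Fin (2*n))} (hg : g ∈ typeCGenerators n) :
    HW g ∧ g * g = 1 := by
  rcases hg with ⟨hn, rfl⟩ | ⟨i, h1, h2, h3, rfl⟩
  · exact ⟨sw_hw rfl rfl, sw_mul_self rfl rfl⟩
  · exact ⟨gi_hw h1 h2 rfl rfl rfl rfl, gi_mul_self h1 h2 rfl rfl rfl rfl⟩

lemma gen_step {g : Equiv.Perm (Fin (2*n))} (hg : g ∈ typeCGenerators n)
    (w : Equiv.Perm (Fin (2*n))) (hw : HW w) :
    Lfun n (g * w) = Lfun n w + 1 ∨ Lfun n (g * w) + 1 = Lfun n w := by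
  rcases hg with ⟨hn, rfl⟩ | ⟨i, h1, h2, h3, rfl⟩
  · set u : Fin (2*n) := ⟨n - 1, by omega⟩
    set v : Fin (2*n) := ⟨n, by omega⟩
    have huv : u ≠ v := by
      intro h; have := congrArg Fin.val h
      simp only [u, v] at this; omega
    have hne : ((w⁻¹ u : Fin (2*n)):ℕ) ≠ ((w⁻¹ v : Fin (2*n)):ℕ) := by
      intro h; exact huv (w⁻¹.injective (Fin.ext h))
    rcases Nat.lt_or_ge ((w⁻¹ u : Fin (2*n)):ℕ) ((w⁻¹ v : Fin (2*n)):ℕ) with hlt | hge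
    · exact Or.inl ((Lstep0 rfl rfl w hw).1 hlt)
    · exact Or.inr ((Lstep0 rfl rfl w hw).2 (by omega))
  · set A : Fin (2*n) := ⟨n - i - 1, by omega⟩
    set A' : Fin (2*n) := ⟨n - i, by omega⟩
    have huv : A ≠ A' := by
      intro h; have := congrArg Fin.val h
      simp only [A, A'] at this; omega
    have hne : ((w⁻¹ A : Fin (2*n)):ℕ) ≠ ((w⁻¹ A' : Fin (2*n)):ℕ) := by
      intro h; exact huv (w⁻¹.injective (Fin.ext h))
    rcases Nat.lt_or_ge ((w⁻¹ A : Fin (2*n)):ℕ) ((w⁻¹ A' : Fin (2*n)):ℕ) with hlt | hge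
    · exact Or.inl ((Lstepi h1 h2 rfl rfl rfl rfl w hw).1 hlt)
    · exact Or.inr ((Lstepi h1 h2 rfl rfl rfl rfl w hw).2 (by omega))

lemma prod_hw (l : List (Equiv.Perm (Fin (2*n)))) (hl : ∀ g ∈ l, g ∈ typeCGenerators n) :
    HW l.prod := by
  induction l with
  | nil => exact HW.one
  | cons g l ih =>
      rw [List.prod_cons]
      exact HW.mul (gen_hw (hl g (by simp))).1 (ih (fun g' h' => hl g' (by simp [h'])))

lemma Lfun_le (l : List (Equiv.Perm (Fin (2*n)))) (hl : ∀ g ∈ l, g ∈ typeCGenerators n) :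
    Lfun n l.prod ≤ l.length := by
  induction l with
  | nil => simp [List.prod_nil, Lfun_one]
  | cons g l ih =>
      rw [List.prod_cons]
      have h1 := gen_step (hl g (by simp)) l.prod (prod_hw l (fun g' h' => hl g' (by simp [h'])))
      have h2 := ih (fun g' h' => hl g' (by simp [h']))
      simp only [List.length_cons]
      omega

lemma exists_descent (w : Equiv.Perm (Fin (2*n))) (hw : HW w) (hne : w ≠ 1) :
    ∃ g ∈ typeCGenerators n, Lfun n (g * w) + 1 = Lfun n w := by
  by_cases hasc : ∀ p q : Fin (2*n), (p:ℕ) + 1 = (q:ℕ) → (q:ℕ) ≤ n →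
      ((w⁻¹ p : Fin (2*n)):ℕ) < ((w⁻¹ q : Fin (2*n)):ℕ)
  · exfalso
    have key : ∀ p q : Fin (2*n), (p:ℕ) + 1 = (q:ℕ) →
        ((w⁻¹ p : Fin (2*n)):ℕ) < ((w⁻¹ q : Fin (2*n)):ℕ) := by
      intro p q hpq
      by_cases hq : (q:ℕ) ≤ n
      · exact hasc p q hpq hq
      · have hqlt := q.isLt
        have h' := hasc q.rev p.rev (by rw [rev_val, rev_val]; omega) (by rw [rev_val]; omega)
        rw [hw.inv, hw.inv, rev_val, rev_val] at h'
        have := (w⁻¹ p).isLt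
        have := (w⁻¹ q).isLt
        omega
    have hle : ∀ (v : ℕ) (p : Fin (2*n)), (p:ℕ) = v → v ≤ ((w⁻¹ p : Fin (2*n)):ℕ) := by
      intro v
      induction v with
      | zero => intro p _; exact Nat.zero_le _
      | succ m ih =>
          intro p hp
          have hplt := p.isLt
          have hp' : ((⟨m, by omega⟩ : Fin (2*n)) : ℕ) = m := rfl
          have h1 := ih ⟨m, by omega⟩ hp'
          have h2 := key ⟨m, by omega⟩ p (by omega)
          omega
    have hge : ∀ (d v : ℕ) (p : Fin (2*n)), (p:ℕ) = v → v + d = 2*n - 1 →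
        ((w⁻¹ p : Fin (2*n)):ℕ) ≤ v := by
      intro d
      induction d with
      | zero =>
          intro v p hp hv
          have := (w⁻¹ p).isLt
          omega
      | succ m ih =>
          intro v p hp hv
          have hplt := p.isLt
          have hq' : ((⟨v+1, by omega⟩ : Fin (2*n)) : ℕ) = v + 1 := rfl
          have h1 := ih (v+1) ⟨v+1, by omega⟩ hq' (by omega)
          have h2 := key p ⟨v+1, by omega⟩ (by omega)
          omega
    apply hne
    have hinv : w⁻¹ = 1 := by
      ext p
      have hplt := p.isLt
      have h1 := hle (p:ℕ) p rfl
      have h2 := hge (2*n - 1 - (p:ℕ)) (p:ℕ) p rfl (by omega)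
      simp only [Equiv.Perm.one_apply]
      omega
    rw [← inv_inv w, hinv, inv_one]
  · push_neg at hasc
    obtain ⟨p, q, hpq, hqn, hgece⟩ := hasc
    have hqpos : 0 < n := by omega
    have hnepq : ((w⁻¹ p : Fin (2*n)):ℕ) ≠ ((w⁻¹ q : Fin (2*n)):ℕ) := by
      intro h
      have : p = q := w⁻¹.injective (Fin.ext h)
      have := congrArg Fin.val this
      omega
    have hdesc : ((w⁻¹ q : Fin (2*n)):ℕ) < ((w⁻¹ p : Fin (2*n)):ℕ) := by omega
    by_cases hq : (q:ℕ) = n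
    · refine ⟨Equiv.swap p q, Or.inl ⟨hqpos, ?_⟩, ?_⟩
      · rw [show p = (⟨n - 1, by omega⟩ : Fin (2*n)) from Fin.ext (show (p:ℕ) = n - 1 by omega),
          show q = (⟨n, by omega⟩ : Fin (2*n)) from Fin.ext (show (q:ℕ) = n by omega)]
      · exact (Lstep0 (u := p) (v := q) (show (p:ℕ) = n - 1 by omega)
          (show (q:ℕ) = n by omega) w hw).2 hdesc
    · obtain ⟨i, hi⟩ : ∃ i : ℕ, i = n - (q:ℕ) := ⟨n - (q:ℕ), rfl⟩
      have h1 : 1 ≤ i := by omega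
      have h2 : i ≤ n - 1 := by omega
      have hb1 : n + i - 1 < 2*n := by omega
      have hb2 : n + i < 2*n := by omega
      have hc1 : n - i - 1 < 2*n := by omega
      have hc2 : n - i < 2*n := by omega
      refine ⟨Equiv.swap p q * Equiv.swap (⟨n + i - 1, hb1⟩ : Fin (2*n)) ⟨n + i, hb2⟩,
        Or.inr ⟨i, h1, h2, hqpos, ?_⟩, ?_⟩
      · rw [show p = (⟨n - i - 1, hc1⟩ : Fin (2*n)) from
            Fin.ext (show (p:ℕ) = n - i - 1 by omega),
          show q = (⟨n - i, hc2⟩ : Fin (2*n)) from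
            Fin.ext (show (q:ℕ) = n - i by omega)]
      · exact (Lstepi (a := p) (a' := q) h1 h2 (show (p:ℕ) = n - i - 1 by omega)
          (show (q:ℕ) = n - i by omega) rfl rfl w hw).2 hdesc

lemma reach : ∀ (m : ℕ) (w : Equiv.Perm (Fin (2*n))), HW w → Lfun n w = m →
    IsProdOfGens n m w := by
  intro m
  induction m with
  | zero =>
      intro w hw hL
      by_cases hne : w = 1
      · exact ⟨[], rfl, by simp, by rw [List.prod_nil, hne]⟩
      · obtain ⟨g, hgmem, hstep⟩ := exists_descent w hw hne
        omega
  | succ m ih =>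
      intro w hw hL
      have hne : w ≠ 1 := by
        intro h; rw [h, Lfun_one] at hL; omega
      obtain ⟨g, hgmem, hstep⟩ := exists_descent w hw hne
      have hghw := gen_hw hgmem
      obtain ⟨l, hlen, hmem, hprod⟩ := ih (g * w) (HW.mul hghw.1 hw) (by omega)
      refine ⟨g :: l, by simp [hlen], ?_, ?_⟩
      · intro g' h'
        rcases List.mem_cons.mp h' with h'' | h''
        · rw [h'']; exact hgmem
        · exact hmem g' h''
      · rw [List.prod_cons, hprod, ← mul_assoc, hghw.2, one_mul]

/-- For `w ∈ W(Cₙ) = {w ∈ S_{2n} : w(2n+1-i) = 2n+1-w(i)}` define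
`S(w) = {(i,j) : 1 ≤ i < j < 2n+1-i, w⁻¹(i) < w⁻¹(j)}` (here written 0-indexed:
`i < j`, `i + j < 2n - 1`).  Then `|S(w)| + #{i ≤ n : w(i) ≤ n} = n² - ℓ(w)` where
`ℓ(w)` is the Coxeter length of `w` (stated additively as `… + ℓ(w) = n²`). -/
theorem card_S_add_card_fixed_eq_positives_sub_length
    (n : ℕ) (w : Equiv.Perm (Fin (2 * n)))
    (hW : ∀ i : Fin (2 * n), w i.rev = (w i).rev)
    (k : ℕ) (hk : IsProdOfGens n k w)
    (hkmin : ∀ k' < k, ¬ IsProdOfGens n k' w) :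
    (Finset.univ.filter (fun p : Fin (2 * n) × Fin (2 * n) =>
        (p.1 : ℕ) < (p.2 : ℕ) ∧ (p.1 : ℕ) + (p.2 : ℕ) < 2 * n - 1 ∧
        ((w⁻¹ p.1 : Fin (2 * n)) : ℕ) < ((w⁻¹ p.2 : Fin (2 * n)) : ℕ))).card +
      (Finset.univ.filter (fun i : Fin (2 * n) =>
        (i : ℕ) < n ∧ ((w i : Fin (2 * n)) : ℕ) < n)).card + k = n ^ 2 := by
  obtain ⟨l, hlen, hmem, hprod⟩ := hk
  have hW' : HW w := hW
  have hle : Lfun n w ≤ k := by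
    rw [← hprod, ← hlen]
    exact Lfun_le l hmem
  have hreach := reach (Lfun n w) w hW' rfl
  have hge : k ≤ Lfun n w := by
    by_contra hcon
    push_neg at hcon
    exact hkmin (Lfun n w) hcon hreach
  have hk2 : Lfun n w = k := le_antisymm hle hge
  have hS := S_split w
  have hD := D_split w
  have hL : Lfun n w = (cS n w).card + (cD n w).card := rfl
  have hpow : n ^ 2 = n * n := pow_two n
  omega
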